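/- Let E be a real inner product space, x_c ∈ E, η₁ > 0 and η₂ ∈ ℝ, and set x̄_c = (η₁/(1 + η₁))·x_c and r̄ = ((1 + η₁)·η₂ − η₁·‖x_c‖²)/(1 + η₁)². If x ∈ E satisfies both ‖x − x̄_c‖² = r̄ and ‖x‖² = ⟨x, x̄_c⟩ (i.e., x lies on the sphere R₃ and on a hyperplane tangent to that sphere passing through the origin), then ‖x‖² = φ(x_c), where φ(x_c) = (η₁·‖x_c‖² − η₂)/(η₁ + 1). -/
import Mathlib

open scoped InnerProductSpace

/-- A point of the sphere `R₃` lying on a tangent hyperplane through the origin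
has squared norm `φ(x_c) = (η₁‖x_c‖² - η₂)/(η₁+1)`. -/
theorem contact_point_norm_sq
    {E : Type*} [NormedAddCommGroup E] [InnerProductSpace ℝ E]
    (x_c : E) (η₁ η₂ : ℝ) (hη₁ : 0 < η₁)
    (xbar : E) (hxbar : xbar = (η₁ / (1 + η₁)) • x_c)
    (rbar : ℝ) (hrbar : rbar = ((1 + η₁) * η₂ - η₁ * ‖x_c‖ ^ 2) / (1 + η₁) ^ 2)
    (x : E) (hsphere : ‖x - xbar‖ ^ 2 = rbar) (htangent : ‖x‖ ^ 2 = ⟪x, xbar⟫_ℝ) :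
    ‖x‖ ^ 2 = (η₁ * ‖x_c‖ ^ 2 - η₂) / (η₁ + 1) := by
  have h1 : (0:ℝ) < 1 + η₁ := by linarith
  have hexp : ‖x - xbar‖ ^ 2 = ‖x‖ ^ 2 - 2 * ⟪x, xbar⟫_ℝ + ‖xbar‖ ^ 2 := by
    rw [@norm_sub_sq_real]
  have hxb : ‖xbar‖ ^ 2 = (η₁ / (1 + η₁)) ^ 2 * ‖x_c‖ ^ 2 := by
    rw [hxbar, norm_smul, mul_pow, Real.norm_eq_abs, sq_abs]
  have key : ‖x‖ ^ 2 = ‖xbar‖ ^ 2 - rbar := by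
    rw [← hsphere, hexp, ← htangent]; ring
  rw [key, hxb, hrbar]
  field_simp
  ring
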